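/- The axiom (Ung4) is sound: for all expressions E, F, rec X.(τ.(pri(X) + E) + F) ≃ rec X.(τ.X + E + F). -/
import Mathlib


namespace PrioCalc

inductive Act where
  | tau : Act
  | vis : ℕ → Act
  | delta : Act
deriving DecidableEq

inductive Expr where
  | nil : Expr
  | var : ℕ → Expr
  | pre : Act → Expr → Expr
  | sum : Expr → Expr → Expr
  | recur : ℕ → Expr → Expr
  | pri : Expr → Expr
deriving DecidableEq

/-- Syntactic substitution of `F` for the free occurrences of variable `x`. -/
def subst : Expr → ℕ → Expr → Expr
  | .nil, _, _ => .nil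
  | .var m, x, F => if m = x then F else .var m
  | .pre γ E, x, F => .pre γ (subst E x F)
  | .sum E G, x, F => .sum (subst E x F) (subst G x F)
  | .recur y E, x, F => if y = x then .recur y E else .recur y (subst E x F)
  | .pri E, x, F => .pri (subst E x F)

/-- `free E x` : `x` occurs free in `E`. -/
def free : Expr → ℕ → Prop
  | .nil, _ => False
  | .var m, x => m = x
  | .pre _ E, x => free E x
  | .sum E G, x => free E x ∨ free G x
  | .recur y E, x => x ≠ y ∧ free E x
  | .pri E, x => free E x

def Closed (E : Expr) : Prop := ∀ x, ¬ free E x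

/-- Standard (non-δ) transitions; these never depend on δ-transitions. -/
inductive StepStd : Expr → Act → Expr → Prop where
  | pre {α : Act} (h : α ≠ Act.delta) (E : Expr) : StepStd (.pre α E) α E
  | sumL {P α P'} (Q : Expr) : StepStd P α P' → StepStd (.sum P Q) α P'
  | sumR {Q α Q'} (P : Expr) : StepStd Q α Q' → StepStd (.sum P Q) α Q'
  | unf {x E γ P'} : StepStd (subst E x (.recur x E)) γ P' → StepStd (.recur x E) γ P'
  | pri {P α P'} : StepStd P α P' → StepStd (.pri P) α P'

def CanTau (P : Expr) : Prop := ∃ P', StepStd P Act.tau P'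

/-- δ-transitions (stratified: the negative premise refers to standard transitions). -/
inductive StepDel : Expr → Expr → Prop where
  | pre (E : Expr) : StepDel (.pre Act.delta E) E
  | sumL {P P'} (Q : Expr) : StepDel P P' → ¬ CanTau Q → StepDel (.sum P Q) P'
  | sumR {Q Q'} (P : Expr) : StepDel Q Q' → ¬ CanTau P → StepDel (.sum P Q) Q'
  | unf {x E P'} : StepDel (subst E x (.recur x E)) P' → StepDel (.recur x E) P'

/-- The full (prioritized) transition relation. -/
def Step (P : Expr) (γ : Act) (Q : Expr) : Prop :=
  if γ = Act.delta then StepDel P Q else StepStd P γ Q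

def TauStar : Expr → Expr → Prop :=
  Relation.ReflTransGen (fun P Q => Step P Act.tau Q)

/-- Weak transition `==γ==>` : τ* γ τ* (at least one γ step). -/
def Weak (P : Expr) (γ : Act) (Q : Expr) : Prop :=
  ∃ P₁ P₂, TauStar P P₁ ∧ Step P₁ γ P₂ ∧ TauStar P₂ Q

/-- Weak transition `==γ̂==>`. -/
def WeakHat (P : Expr) (γ : Act) (Q : Expr) : Prop :=
  if γ = Act.tau then TauStar P Q else Weak P γ Q

def IsWeakBisim (β : Expr → Expr → Prop) : Prop :=
  ∀ P Q, β P Q →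
    (∀ γ P', Step P γ P' → ∃ Q', WeakHat Q γ Q' ∧ β P' Q') ∧
    (∀ γ Q', Step Q γ Q' → ∃ P', WeakHat P γ P' ∧ β P' Q')

/-- Weak bisimilarity `≈`. -/
def WBisim (P Q : Expr) : Prop := ∃ β, IsWeakBisim β ∧ β P Q

/-- Observational congruence `≃`. -/
def ObsCong (P Q : Expr) : Prop :=
  (∀ γ P', Step P γ P' → ∃ Q', Weak Q γ Q' ∧ WBisim P' Q') ∧
  (∀ γ Q', Step Q γ Q' → ∃ P', Weak P γ P' ∧ WBisim P' Q')

/-- Terms of the basic calculus (no occurrence of the auxiliary `pri` operator). -/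
def PriFree : Expr → Prop
  | .nil => True
  | .var _ => True
  | .pre _ E => PriFree E
  | .sum E F => PriFree E ∧ PriFree F
  | .recur _ E => PriFree E
  | .pri _ => False

/-- Every free occurrence of `x` in `E` is (strongly) guarded. -/
def GVar : Expr → ℕ → Prop
  | .nil, _ => True
  | .var m, x => m ≠ x
  | .pre γ E, x => γ = Act.tau → GVar E x
  | .sum E F, x => GVar E x ∧ GVar F x
  | .recur y E, x => y ≠ x → GVar E x
  | .pri E, x => GVar E x

/-- `E` is (strongly) guarded: every recursion subterm is guarded. -/
def Guarded : Expr → Prop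
  | .nil => True
  | .var _ => True
  | .pre _ E => Guarded E
  | .sum E F => Guarded E ∧ Guarded F
  | .recur y E => GVar E y ∧ Guarded E
  | .pri E => Guarded E

/-- Some free occurrence of `x` in `E` is unguarded (not under a non-τ prefix). -/
def UnguardedVar : Expr → ℕ → Prop
  | .nil, _ => False
  | .var m, x => m = x
  | .pre γ E, x => γ = Act.tau ∧ UnguardedVar E x
  | .sum E F, x => UnguardedVar E x ∨ UnguardedVar F x
  | .recur y E, x => y ≠ x ∧ UnguardedVar E x
  | .pri E, x => UnguardedVar E x

/-- `x` is serial in `E` : every subexpression containing `x` free, apart from `x`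
itself, is a prefix, a sum or a recursion. -/
def SerialVar : Expr → ℕ → Prop
  | .nil, _ => True
  | .var _, _ => True
  | .pre _ E, x => SerialVar E x
  | .sum E F, x => SerialVar E x ∧ SerialVar F x
  | .recur y E, x => y = x ∨ SerialVar E x
  | .pri E, x => ¬ free E x

/-- Simultaneous substitution of closed terms for free variables. -/
def msubst : Expr → (ℕ → Expr) → Expr
  | .nil, _ => .nil
  | .var m, σ => σ m
  | .pre γ E, σ => .pre γ (msubst E σ)
  | .sum E F, σ => .sum (msubst E σ) (msubst F σ)
  | .recur y E, σ => .recur y (msubst E (Function.update σ y (.var y)))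
  | .pri E, σ => .pri (msubst E σ)

/-- Observational congruence on open terms (via closed substitutions). -/
def ObsCongO (E F : Expr) : Prop :=
  ∀ σ : ℕ → Expr, (∀ n, Closed (σ n)) → ObsCong (msubst E σ) (msubst F σ)

/-- The axiom system 𝒜. -/
inductive Prov : Expr → Expr → Prop where
  | refl (E) : Prov E E
  | symm {E F} : Prov E F → Prov F E
  | trans {E F G} : Prov E F → Prov F G → Prov E G
  | congPre (γ) {E F} : Prov E F → Prov (.pre γ E) (.pre γ F)
  | congSum {E E' F F'} : Prov E E' → Prov F F' → Prov (.sum E F) (.sum E' F')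
  | congRec (x) {E F} : Prov E F → Prov (.recur x E) (.recur x F)
  | congPri {E F} : Prov E F → Prov (.pri E) (.pri F)
  | a1 (E F) : Prov (.sum E F) (.sum F E)
  | a2 (E F G) : Prov (.sum (.sum E F) G) (.sum E (.sum F G))
  | a3 (E) : Prov (.sum E E) E
  | a4 (E) : Prov (.sum E .nil) E
  | tau1 (γ E) : Prov (.pre γ (.pre Act.tau E)) (.pre γ E)
  | tau2 (E) : Prov (.sum E (.pre Act.tau E)) (.pre Act.tau E)
  | tau3 (γ E F) :
      Prov (.sum (.pre γ (.sum E (.pre Act.tau F))) (.pre γ F))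
           (.pre γ (.sum E (.pre Act.tau F)))
  | pri1 : Prov (.pri .nil) .nil
  | pri2 {α} (h : α ≠ Act.delta) (E) : Prov (.pri (.pre α E)) (.pre α E)
  | pri3 (E) : Prov (.pri (.pre Act.delta E)) .nil
  | pri4 (E F) : Prov (.pri (.sum E F)) (.sum (.pri E) (.pri F))
  | pri5 (E) : Prov (.pri (.pri E)) (.pri E)
  | pri6 (E F) : Prov (.sum (.pre Act.tau E) F) (.sum (.pre Act.tau E) (.pri F))
  | rec1 (x E) : Prov (.recur x E) (subst E x (.recur x E))
  | rec2 {x E F} (hs : SerialVar E x) (hg : GVar E x) :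
      Prov F (subst E x F) → Prov F (.recur x E)
  | ung1 (x E) : Prov (.recur x (.sum (.var x) E)) (.recur x E)
  | ung2 (x E) :
      Prov (.recur x (.sum (.pre Act.tau (.var x)) E)) (.recur x (.pre Act.tau (.pri E)))
  | ung3 (x E F) :
      Prov (.recur x (.sum (.pre Act.tau (.sum (.var x) E)) F))
           (.recur x (.sum (.sum (.pre Act.tau (.var x)) E) F))
  | ung4 (x E F) :
      Prov (.recur x (.sum (.pre Act.tau (.sum (.pri (.var x)) E)) F))
           (.recur x (.sum (.sum (.pre Act.tau (.var x)) E) F))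

/-- Standard equation sets: formal variables are `X i = var i` for `i < n`,
free variables are variables `≥ n`. -/
structure StdEqSet (n : ℕ) where
  pres : Fin n → List (Act × Fin n)
  frees : Fin n → List ℕ
  frees_ge : ∀ i, ∀ w ∈ frees i, n ≤ w

/-- The body `H_i{Ẽ/X̃}` of the `i`-th equation with expressions `Es` for the
formal variables. -/
def instBody {n : ℕ} (S : StdEqSet n) (Es : Fin n → Expr) (i : Fin n) : Expr :=
  (S.pres i).foldr (fun p acc => Expr.sum (Expr.pre p.1 (Es p.2)) acc)
    ((S.frees i).foldr (fun w acc => Expr.sum (Expr.var w) acc) Expr.nil)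

/-- `E` provably satisfies `S` (distinguished variable `X 0`). -/
def ProvSat {n : ℕ} (hn : 0 < n) (E : Expr) (S : StdEqSet n) : Prop :=
  ∃ Es : Fin n → Expr, Es ⟨0, hn⟩ = E ∧
    (∀ i x, free (Es i) x → n ≤ x) ∧
    (∀ i, Prov (Es i) (instBody S Es i))

/-- No equation contains both a τ-prefixed and a δ-prefixed summand. -/
def Prioritized {n : ℕ} (S : StdEqSet n) : Prop :=
  ∀ i, (∃ j, (Act.tau, j) ∈ S.pres i) → ∀ j, (Act.delta, j) ∉ S.pres i

/-- No cycle of unguarded (i.e. τ-prefixed) dependencies. -/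
def EqGuarded {n : ℕ} (S : StdEqSet n) : Prop :=
  ∀ i : Fin n, ¬ Relation.TransGen (fun i j : Fin n => (Act.tau, j) ∈ S.pres i) i i

/-- Delete every δ-prefixed summand from equations that also contain a
τ-prefixed summand. -/
def prioritize {n : ℕ} (S : StdEqSet n) : StdEqSet n where
  pres i := if (S.pres i).any (fun p => decide (p.1 = Act.tau))
            then (S.pres i).filter (fun p => decide (p.1 ≠ Act.delta))
            else S.pres i
  frees := S.frees
  frees_ge := S.frees_ge



/-! ### Basic substitution lemmas -/

theorem subst_not_free {G : Expr} {y : ℕ} {K : Expr} (h : ¬ free G y) : subst G y K = G := by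
  induction G with
  | nil => rfl
  | var m => simp only [free] at h; simp [subst, h]
  | pre γ E ih => simp only [free] at h; simp [subst, ih h]
  | sum E F ihE ihF =>
    simp only [free] at h; push_neg at h
    simp [subst, ihE h.1, ihF h.2]
  | recur z E ih =>
    simp only [free] at h
    by_cases hz : z = y
    · simp [subst, hz]
    · have hyz : y ≠ z := fun hh => hz hh.symm
      have hE : ¬ free E y := fun hf => h ⟨hyz, hf⟩
      simp [subst, hz, ih hE]
  | pri E ih => simp only [free] at h; simp [subst, ih h]

theorem msubst_congr {G : Expr} {σ ρ : ℕ → Expr} (h : ∀ z, free G z → σ z = ρ z) :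
    msubst G σ = msubst G ρ := by
  induction G generalizing σ ρ with
  | nil => rfl
  | var m => exact h m rfl
  | pre γ E ih => simp only [msubst]; rw [ih (fun z hz => h z hz)]
  | sum E F ihE ihF =>
    simp only [msubst]
    rw [ihE (fun z hz => h z (Or.inl hz)), ihF (fun z hz => h z (Or.inr hz))]
  | recur y E ih =>
    simp only [msubst]
    congr 1
    apply ih
    intro z hz
    by_cases hzy : z = y
    · subst hzy; simp
    · simp only [Function.update_of_ne hzy]
      exact h z ⟨hzy, hz⟩
  | pri E ih => simp only [msubst]; rw [ih (fun z hz => h z hz)]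

theorem msubst_var {G : Expr} : msubst G (fun z => Expr.var z) = G := by
  induction G with
  | nil => rfl
  | var m => rfl
  | pre γ E ih => simp only [msubst]; rw [ih]
  | sum E F ihE ihF => simp only [msubst]; rw [ihE, ihF]
  | recur y E ih =>
    simp only [msubst]
    congr 1
    rw [show Function.update (fun z => Expr.var z) y (Expr.var y) = fun z => Expr.var z from
      funext (fun z => by by_cases h : z = y <;> simp [h])]
    exact ih
  | pri E ih => simp only [msubst]; rw [ih]

/-- the one-hole substitution -/
def hole (x : ℕ) (T : Expr) : ℕ → Expr := fun z => if z = x then T else Expr.var z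

theorem subst_eq_msubst {G : Expr} {x : ℕ} {T : Expr} : subst G x T = msubst G (hole x T) := by
  induction G with
  | nil => rfl
  | var m => simp [subst, msubst, hole]
  | pre γ E ih => simp only [subst, msubst]; rw [ih]
  | sum E F ihE ihF => simp only [subst, msubst]; rw [ihE, ihF]
  | recur y E ih =>
    by_cases hy : y = x
    · subst hy
      show (if y = y then Expr.recur y E else _) = _
      rw [if_pos rfl]
      simp only [msubst]
      rw [show Function.update (hole y T) y (Expr.var y) = fun z => Expr.var z from
        funext (fun z => by by_cases h : z = y
                            · subst h; simp
                            · simp [Function.update_of_ne h, hole, h])]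
      rw [msubst_var]
    · simp only [subst, if_neg hy, msubst]
      congr 1
      rw [show Function.update (hole x T) y (Expr.var y) = hole x T from
        funext (fun z => by by_cases h : z = y
                            · subst h; simp [hole, hy]
                            · simp [Function.update_of_ne h])]
      exact ih
  | pri E ih => simp only [subst, msubst]; rw [ih]

theorem free_msubst {G : Expr} {σ : ℕ → Expr} {w : ℕ} (h : free (msubst G σ) w) :
    ∃ z, free G z ∧ free (σ z) w := by
  induction G generalizing σ with
  | nil => exact absurd h (by simp [msubst, free])
  | var m => exact ⟨m, rfl, h⟩
  | pre γ E ih => exact ih h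
  | sum E F ihE ihF =>
    rcases h with h | h
    · rcases ihE h with ⟨z, h1, h2⟩; exact ⟨z, Or.inl h1, h2⟩
    · rcases ihF h with ⟨z, h1, h2⟩; exact ⟨z, Or.inr h1, h2⟩
  | recur y E ih =>
    obtain ⟨hwy, h⟩ := h
    rcases ih h with ⟨z, h1, h2⟩
    by_cases hzy : z = y
    · subst hzy; simp at h2; exact absurd h2.symm hwy
    · rw [Function.update_of_ne hzy] at h2
      exact ⟨z, ⟨hzy, h1⟩, h2⟩
  | pri E ih => exact ih h

theorem msubst_closed {G : Expr} {σ : ℕ → Expr} (h : ∀ z, free G z → Closed (σ z)) :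
    Closed (msubst G σ) := by
  intro w hw
  rcases free_msubst hw with ⟨z, h1, h2⟩
  exact h z h1 w h2

theorem msubst_subst {H : Expr} {y : ℕ} {σ : ℕ → Expr} {K : Expr}
    (hσ : ∀ m, free H m → m ≠ y → (σ m = Expr.var m ∨ Closed (σ m))) (hK : Closed K) :
    subst (msubst H (Function.update σ y (Expr.var y))) y K
      = msubst H (Function.update σ y K) := by
  induction H generalizing σ with
  | nil => rfl
  | var m =>
    by_cases hm : m = y
    · subst hm; simp [msubst, subst]
    · simp only [msubst, Function.update_of_ne hm]
      rcases hσ m rfl hm with h | h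
      · rw [h]; simp [subst, hm]
      · exact subst_not_free (h y)
  | pre γ E ih =>
    simp only [msubst, subst]
    rw [ih (fun m hm => hσ m hm)]
  | sum E F ihE ihF =>
    simp only [msubst, subst]
    rw [ihE (fun m hm => hσ m (Or.inl hm)), ihF (fun m hm => hσ m (Or.inr hm))]
  | recur z E ih =>
    by_cases hz : z = y
    · subst hz
      simp [msubst, Function.update_idem, subst]
    · have hyz : y ≠ z := fun hh => hz hh.symm
      simp only [msubst, subst, if_neg hz]
      congr 1
      rw [Function.update_comm hyz, Function.update_comm hyz]
      exact ih (σ := Function.update σ z (Expr.var z)) (fun m hm hmy => by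
        by_cases hmz : m = z
        · subst hmz; simp
        · rw [Function.update_of_ne hmz]
          exact hσ m ⟨hmz, hm⟩ hmy)
  | pri E ih =>
    simp only [msubst, subst]
    rw [ih (fun m hm => hσ m hm)]


/-! ### Active occurrences -/


inductive Atop : Expr → ℕ → Prop where
  | var (z : ℕ) : Atop (.var z) z
  | sumL {G z} (H : Expr) : Atop G z → Atop (.sum G H) z
  | sumR {H z} (G : Expr) : Atop H z → Atop (.sum G H) z
  | pri {G z} : Atop G z → Atop (.pri G) z
  | recur {H z} (y : ℕ) : y ≠ z → Atop H z → Atop (.recur y H) z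

theorem atop_free {G : Expr} {z : ℕ} (h : Atop G z) : free G z := by
  induction h with
  | var => rfl
  | sumL _ _ ih => exact Or.inl ih
  | sumR _ _ ih => exact Or.inr ih
  | pri _ ih => exact ih
  | recur y hne _ ih => exact ⟨fun hh => hne hh.symm, ih⟩

theorem stepStd_ne_delta {T : Expr} {γ : Act} {V : Expr} (h : StepStd T γ V) :
    γ ≠ Act.delta := by
  induction h with
  | pre hne _ => exact hne
  | sumL _ _ ih => exact ih
  | sumR _ _ ih => exact ih
  | unf _ ih => exact ih
  | pri _ ih => exact ih

/-- injecting a standard step of a term sitting at an active position -/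
theorem atop_inj {G : Expr} {z : ℕ} (hA : Atop G z) :
    ∀ (σ : ℕ → Expr), (∀ w, free G w → Closed (σ w)) →
    ∀ {γ V}, StepStd (σ z) γ V → StepStd (msubst G σ) γ V := by
  induction hA with
  | var z => intro σ _ γ V h; exact h
  | sumL H _ ih =>
    intro σ hcl γ V h
    exact StepStd.sumL _ (ih σ (fun w hw => hcl w (Or.inl hw)) h)
  | sumR G _ ih =>
    intro σ hcl γ V h
    exact StepStd.sumR _ (ih σ (fun w hw => hcl w (Or.inr hw)) h)
  | pri _ ih =>
    intro σ hcl γ V h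
    exact StepStd.pri (ih σ (fun w hw => hcl w hw) h)
  | @recur H z y hyz _ ih =>
    intro σ hcl γ V h
    have hK : Closed (msubst (Expr.recur y H) σ) := msubst_closed (fun w hw => hcl w hw)
    apply StepStd.unf
    have hKe : Expr.recur y (msubst H (Function.update σ y (Expr.var y)))
        = msubst (Expr.recur y H) σ := rfl
    rw [hKe, msubst_subst (fun m hm hmy => Or.inr (hcl m ⟨hmy, hm⟩)) hK]
    apply ih (Function.update σ y (msubst (Expr.recur y H) σ))
    · intro w hw
      by_cases hwy : w = y
      · subst hwy; simpa using hK
      · rw [Function.update_of_ne hwy]; exact hcl w ⟨hwy, hw⟩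
    · rw [Function.update_of_ne (fun hh => hyz hh.symm)]; exact h

/-! ### Height-indexed transitions -/

inductive StepStdN : ℕ → Expr → Act → Expr → Prop where
  | pre {α : Act} (h : α ≠ Act.delta) (E : Expr) : StepStdN 0 (.pre α E) α E
  | sumL {n P α P'} (Q : Expr) : StepStdN n P α P' → StepStdN (n+1) (.sum P Q) α P'
  | sumR {n Q α Q'} (P : Expr) : StepStdN n Q α Q' → StepStdN (n+1) (.sum P Q) α Q'
  | unf {n x E γ P'} : StepStdN n (subst E x (.recur x E)) γ P' →
      StepStdN (n+1) (.recur x E) γ P'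
  | pri {n P α P'} : StepStdN n P α P' → StepStdN (n+1) (.pri P) α P'

inductive StepDelN : ℕ → Expr → Expr → Prop where
  | pre (E : Expr) : StepDelN 0 (.pre Act.delta E) E
  | sumL {n P P'} (Q : Expr) : StepDelN n P P' → ¬ CanTau Q → StepDelN (n+1) (.sum P Q) P'
  | sumR {n Q Q'} (P : Expr) : StepDelN n Q Q' → ¬ CanTau P → StepDelN (n+1) (.sum P Q) Q'
  | unf {n x E P'} : StepDelN n (subst E x (.recur x E)) P' → StepDelN (n+1) (.recur x E) P'

theorem stepStdN_sound {n T γ V} (h : StepStdN n T γ V) : StepStd T γ V := by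
  induction h with
  | pre hne E => exact .pre hne E
  | sumL Q _ ih => exact .sumL Q ih
  | sumR P _ ih => exact .sumR P ih
  | unf _ ih => exact .unf ih
  | pri _ ih => exact .pri ih

theorem stepStd_toN {T γ V} (h : StepStd T γ V) : ∃ n, StepStdN n T γ V := by
  induction h with
  | pre hne E => exact ⟨0, .pre hne E⟩
  | sumL Q _ ih => rcases ih with ⟨n, hn⟩; exact ⟨n+1, .sumL Q hn⟩
  | sumR P _ ih => rcases ih with ⟨n, hn⟩; exact ⟨n+1, .sumR P hn⟩
  | unf _ ih => rcases ih with ⟨n, hn⟩; exact ⟨n+1, .unf hn⟩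
  | pri _ ih => rcases ih with ⟨n, hn⟩; exact ⟨n+1, .pri hn⟩

theorem stepDelN_sound {n T V} (h : StepDelN n T V) : StepDel T V := by
  induction h with
  | pre E => exact .pre E
  | sumL Q _ hc ih => exact .sumL Q ih hc
  | sumR P _ hc ih => exact .sumR P ih hc
  | unf _ ih => exact .unf ih

theorem stepDel_toN {T V} (h : StepDel T V) : ∃ n, StepDelN n T V := by
  induction h with
  | pre E => exact ⟨0, .pre E⟩
  | sumL Q _ hc ih => rcases ih with ⟨n, hn⟩; exact ⟨n+1, .sumL Q hn hc⟩
  | sumR P _ hc ih => rcases ih with ⟨n, hn⟩; exact ⟨n+1, .sumR P hn hc⟩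
  | unf _ ih => rcases ih with ⟨n, hn⟩; exact ⟨n+1, .unf hn⟩


/-! ### Decomposition of standard steps of a substituted term -/

theorem decompStd (W : Expr → Expr → Prop)
    (hW : ∀ G σ ρ, (∀ z, free G z → Closed (σ z) ∧ Closed (ρ z) ∧ W (σ z) (ρ z)) →
      W (msubst G σ) (msubst G ρ)) :
    ∀ n (G : Expr) (σ ρ : ℕ → Expr) (α : Act) (R' : Expr),
    StepStdN n (msubst G σ) α R' →
    (∀ z, free G z → Closed (σ z) ∧ Closed (ρ z) ∧ W (σ z) (ρ z)) →
    (∃ G' σ' ρ', R' = msubst G' σ' ∧ StepStd (msubst G ρ) α (msubst G' ρ') ∧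
      (∀ z, free G' z → Closed (σ' z) ∧ Closed (ρ' z) ∧ W (σ' z) (ρ' z))) ∨
    (∃ z m, Atop G z ∧ StepStdN m (σ z) α R' ∧ m ≤ n ∧ (m < n ∨ G = .var z)) := by
  intro n
  induction n using Nat.strong_induction_on with
  | _ n IH =>
  intro G σ ρ α R' h hcl
  cases G with
  | nil => exact absurd h (by intro hh; cases hh)
  | var z => exact Or.inr ⟨z, n, .var z, h, le_refl n, Or.inr rfl⟩
  | pre γ0 G1 =>
    cases h with
    | pre hne => exact Or.inl ⟨G1, σ, ρ, rfl, .pre hne _, fun z hz => hcl z hz⟩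
  | sum G1 G2 =>
    cases h with
    | @sumL n1 _ _ _ _ h1 =>
      rcases IH n1 (by omega) G1 σ ρ α R' h1 (fun z hz => hcl z (Or.inl hz)) with
        ⟨G', σ', ρ', hR, st, h'⟩ | ⟨z, m, hA, hs, hle, _⟩
      · exact Or.inl ⟨G', σ', ρ', hR, .sumL _ st, h'⟩
      · exact Or.inr ⟨z, m, .sumL _ hA, hs, by omega, Or.inl (by omega)⟩
    | @sumR n1 _ _ _ _ h1 =>
      rcases IH n1 (by omega) G2 σ ρ α R' h1 (fun z hz => hcl z (Or.inr hz)) with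
        ⟨G', σ', ρ', hR, st, h'⟩ | ⟨z, m, hA, hs, hle, _⟩
      · exact Or.inl ⟨G', σ', ρ', hR, .sumR _ st, h'⟩
      · exact Or.inr ⟨z, m, .sumR _ hA, hs, by omega, Or.inl (by omega)⟩
  | recur y H =>
    cases h with
    | @unf n1 _ _ _ _ h1 =>
      have hKσ : Closed (msubst (Expr.recur y H) σ) :=
        msubst_closed (fun w hw => (hcl w hw).1)
      have hKρ : Closed (msubst (Expr.recur y H) ρ) :=
        msubst_closed (fun w hw => (hcl w hw).2.1)
      have hKeσ : Expr.recur y (msubst H (Function.update σ y (Expr.var y)))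
          = msubst (Expr.recur y H) σ := rfl
      have hKeρ : Expr.recur y (msubst H (Function.update ρ y (Expr.var y)))
          = msubst (Expr.recur y H) ρ := rfl
      rw [hKeσ, msubst_subst (fun m hm hmy => Or.inr ((hcl m ⟨hmy, hm⟩).1)) hKσ] at h1
      have hcl2 : ∀ z, free H z →
          Closed (Function.update σ y (msubst (Expr.recur y H) σ) z) ∧
          Closed (Function.update ρ y (msubst (Expr.recur y H) ρ) z) ∧
          W (Function.update σ y (msubst (Expr.recur y H) σ) z)
            (Function.update ρ y (msubst (Expr.recur y H) ρ) z) := by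
        intro z hz
        by_cases hzy : z = y
        · rw [hzy]
          simp only [Function.update_self]
          exact ⟨hKσ, hKρ, hW (Expr.recur y H) σ ρ hcl⟩
        · rw [Function.update_of_ne hzy, Function.update_of_ne hzy]
          exact hcl z ⟨hzy, hz⟩
      rcases IH n1 (by omega) H _ _ α R' h1 hcl2 with
        ⟨G', σ', ρ', hR, st, h'⟩ | ⟨z, m, hA, hs, hle, _⟩
      · refine Or.inl ⟨G', σ', ρ', hR, ?_, h'⟩
        apply StepStd.unf
        rw [hKeρ, msubst_subst (fun m hm hmy => Or.inr ((hcl m ⟨hmy, hm⟩).2.1)) hKρ]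
        exact st
      · by_cases hzy : z = y
        · subst hzy
          rw [Function.update_self] at hs
          rcases IH m (by omega) (Expr.recur z H) σ ρ α R' hs hcl with
            ⟨G', σ', ρ', hR, st, h'⟩ | ⟨z', m', hA', hs', hle', _⟩
          · exact Or.inl ⟨G', σ', ρ', hR, st, h'⟩
          · exact Or.inr ⟨z', m', hA', hs', by omega, Or.inl (by omega)⟩
        · rw [Function.update_of_ne hzy] at hs
          exact Or.inr ⟨z, m, .recur y (fun hh => hzy hh.symm) hA, hs, by omega,
            Or.inl (by omega)⟩
  | pri G1 =>
    cases h with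
    | @pri n1 _ _ _ h1 =>
      rcases IH n1 (by omega) G1 σ ρ α R' h1 (fun z hz => hcl z hz) with
        ⟨G', σ', ρ', hR, st, h'⟩ | ⟨z, m, hA, hs, hle, _⟩
      · exact Or.inl ⟨G', σ', ρ', hR, .pri st, h'⟩
      · exact Or.inr ⟨z, m, .pri hA, hs, by omega, Or.inl (by omega)⟩

/-! ### Decomposition of δ-steps of a substituted term -/

theorem decompDel (W : Expr → Expr → Prop)
    (hW : ∀ G σ ρ, (∀ z, free G z → Closed (σ z) ∧ Closed (ρ z) ∧ W (σ z) (ρ z)) →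
      W (msubst G σ) (msubst G ρ))
    (hCT : ∀ T U, W T U → (CanTau T ↔ CanTau U)) :
    ∀ n (G : Expr) (σ ρ : ℕ → Expr) (R' : Expr),
    StepDelN n (msubst G σ) R' →
    (∀ z, free G z → Closed (σ z) ∧ Closed (ρ z) ∧ W (σ z) (ρ z)) →
    (∃ G' σ' ρ', R' = msubst G' σ' ∧ StepDel (msubst G ρ) (msubst G' ρ') ∧
      (∀ z, free G' z → Closed (σ' z) ∧ Closed (ρ' z) ∧ W (σ' z) (ρ' z))) ∨
    (∃ z m, Atop G z ∧ StepDelN m (σ z) R' ∧ m ≤ n ∧ (m < n ∨ G = .var z) ∧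
      (∀ V, StepDel (ρ z) V → StepDel (msubst G ρ) V)) := by
  intro n
  induction n using Nat.strong_induction_on with
  | _ n IH =>
  intro G σ ρ R' h hcl
  cases G with
  | nil => exact absurd h (by intro hh; cases hh)
  | var z => exact Or.inr ⟨z, n, .var z, h, le_refl n, Or.inr rfl, fun V hV => hV⟩
  | pre γ0 G1 =>
    cases h with
    | pre => exact Or.inl ⟨G1, σ, ρ, rfl, .pre _, fun z hz => hcl z hz⟩
  | sum G1 G2 =>
    cases h with
    | @sumL n1 _ _ _ h1 hnc =>
      have hnc2 : ¬ CanTau (msubst G2 ρ) := fun hc => hnc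
        (((hCT _ _ (hW G2 σ ρ (fun z hz => hcl z (Or.inr hz))))).mpr hc)
      rcases IH n1 (by omega) G1 σ ρ R' h1 (fun z hz => hcl z (Or.inl hz)) with
        ⟨G', σ', ρ', hR, st, h'⟩ | ⟨z, m, hA, hs, hle, _, tf⟩
      · exact Or.inl ⟨G', σ', ρ', hR, .sumL _ st hnc2, h'⟩
      · exact Or.inr ⟨z, m, .sumL _ hA, hs, by omega, Or.inl (by omega),
          fun V hV => .sumL _ (tf V hV) hnc2⟩
    | @sumR n1 _ _ _ h1 hnc =>
      have hnc2 : ¬ CanTau (msubst G1 ρ) := fun hc => hnc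
        (((hCT _ _ (hW G1 σ ρ (fun z hz => hcl z (Or.inl hz))))).mpr hc)
      rcases IH n1 (by omega) G2 σ ρ R' h1 (fun z hz => hcl z (Or.inr hz)) with
        ⟨G', σ', ρ', hR, st, h'⟩ | ⟨z, m, hA, hs, hle, _, tf⟩
      · exact Or.inl ⟨G', σ', ρ', hR, .sumR _ st hnc2, h'⟩
      · exact Or.inr ⟨z, m, .sumR _ hA, hs, by omega, Or.inl (by omega),
          fun V hV => .sumR _ (tf V hV) hnc2⟩
  | recur y H =>
    cases h with
    | @unf n1 _ _ _ h1 =>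
      have hKσ : Closed (msubst (Expr.recur y H) σ) :=
        msubst_closed (fun w hw => (hcl w hw).1)
      have hKρ : Closed (msubst (Expr.recur y H) ρ) :=
        msubst_closed (fun w hw => (hcl w hw).2.1)
      have hKeσ : Expr.recur y (msubst H (Function.update σ y (Expr.var y)))
          = msubst (Expr.recur y H) σ := rfl
      have hKeρ : Expr.recur y (msubst H (Function.update ρ y (Expr.var y)))
          = msubst (Expr.recur y H) ρ := rfl
      rw [hKeσ, msubst_subst (fun m hm hmy => Or.inr ((hcl m ⟨hmy, hm⟩).1)) hKσ] at h1
      have hcl2 : ∀ z, free H z →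
          Closed (Function.update σ y (msubst (Expr.recur y H) σ) z) ∧
          Closed (Function.update ρ y (msubst (Expr.recur y H) ρ) z) ∧
          W (Function.update σ y (msubst (Expr.recur y H) σ) z)
            (Function.update ρ y (msubst (Expr.recur y H) ρ) z) := by
        intro z hz
        by_cases hzy : z = y
        · rw [hzy]
          simp only [Function.update_self]
          exact ⟨hKσ, hKρ, hW (Expr.recur y H) σ ρ hcl⟩
        · rw [Function.update_of_ne hzy, Function.update_of_ne hzy]
          exact hcl z ⟨hzy, hz⟩
      rcases IH n1 (by omega) H _ _ R' h1 hcl2 with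
        ⟨G', σ', ρ', hR, st, h'⟩ | ⟨z, m, hA, hs, hle, _, tf⟩
      · refine Or.inl ⟨G', σ', ρ', hR, ?_, h'⟩
        apply StepDel.unf
        rw [hKeρ, msubst_subst (fun m hm hmy => Or.inr ((hcl m ⟨hmy, hm⟩).2.1)) hKρ]
        exact st
      · by_cases hzy : z = y
        · subst hzy
          rw [Function.update_self] at hs
          rcases IH m (by omega) (Expr.recur z H) σ ρ R' hs hcl with
            ⟨G', σ', ρ', hR, st, h'⟩ | ⟨z', m', hA', hs', hle', _, tf'⟩
          · exact Or.inl ⟨G', σ', ρ', hR, st, h'⟩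
          · exact Or.inr ⟨z', m', hA', hs', by omega, Or.inl (by omega), tf'⟩
        · rw [Function.update_of_ne hzy] at hs
          refine Or.inr ⟨z, m, .recur y (fun hh => hzy hh.symm) hA, hs, by omega,
            Or.inl (by omega), ?_⟩
          intro V hV
          apply StepDel.unf
          rw [hKeρ, msubst_subst (fun m hm hmy => Or.inr ((hcl m ⟨hmy, hm⟩).2.1)) hKρ]
          exact tf V (by rwa [Function.update_of_ne hzy])
  | pri G1 => exact absurd h (by intro hh; cases hh)

/-! ### The two processes and the bisimulation candidate -/

/-- `rec x.(τ.(pri(x) + E0) + F0)` -/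
def PP (x : ℕ) (E0 F0 : Expr) : Expr :=
  .recur x (.sum (.pre Act.tau (.sum (.pri (.var x)) E0)) F0)

/-- `rec x.(τ.x + E0 + F0)` -/
def QQ (x : ℕ) (E0 F0 : Expr) : Expr :=
  .recur x (.sum (.sum (.pre Act.tau (.var x)) E0) F0)

/-- the τ-derivative of `PP`. -/
def APP (x : ℕ) (E0 F0 : Expr) : Expr :=
  .sum (.pri (PP x E0 F0)) (subst E0 x (PP x E0 F0))

inductive Rel (x : ℕ) (E0 F0 : Expr) : Expr → Expr → Prop where
  | base : Rel x E0 F0 (PP x E0 F0) (QQ x E0 F0)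
  | baseA : Rel x E0 F0 (APP x E0 F0) (QQ x E0 F0)
  | ctx (G : Expr) (σ ρ : ℕ → Expr) :
      (∀ z, free G z → Closed (σ z)) → (∀ z, free G z → Closed (ρ z)) →
      (∀ z, free G z → Rel x E0 F0 (σ z) (ρ z)) →
      Rel x E0 F0 (msubst G σ) (msubst G ρ)

theorem rel_ctx' {x : ℕ} {E0 F0 : Expr} (G : Expr) (σ ρ : ℕ → Expr)
    (h : ∀ z, free G z → Closed (σ z) ∧ Closed (ρ z) ∧ Rel x E0 F0 (σ z) (ρ z)) :
    Rel x E0 F0 (msubst G σ) (msubst G ρ) :=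
  .ctx G σ ρ (fun z hz => (h z hz).1) (fun z hz => (h z hz).2.1) (fun z hz => (h z hz).2.2)

theorem closed_PP {x : ℕ} {E0 F0 : Expr}
    (hE : ∀ z, free E0 z → z = x) (hF : ∀ z, free F0 z → z = x) :
    Closed (PP x E0 F0) := by
  intro w hw
  simp only [PP, free] at hw
  obtain ⟨hwx, hw⟩ := hw
  rcases hw with (hw | hw) | hw
  · exact hwx hw.symm
  · exact hwx (hE w hw)
  · exact hwx (hF w hw)

theorem closed_QQ {x : ℕ} {E0 F0 : Expr}
    (hE : ∀ z, free E0 z → z = x) (hF : ∀ z, free F0 z → z = x) :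
    Closed (QQ x E0 F0) := by
  intro w hw
  simp only [QQ, free] at hw
  obtain ⟨hwx, hw⟩ := hw
  rcases hw with (hw | hw) | hw
  · exact hwx hw.symm
  · exact hwx (hE w hw)
  · exact hwx (hF w hw)

theorem closed_substC {x : ℕ} {G T : Expr} (hG : ∀ z, free G z → z = x)
    (hT : Closed T) : Closed (subst G x T) := by
  rw [subst_eq_msubst]
  apply msubst_closed
  intro z hz
  have := hG z hz
  subst this
  simp only [hole, if_pos rfl]
  exact hT

theorem closed_APP {x : ℕ} {E0 F0 : Expr}
    (hE : ∀ z, free E0 z → z = x) (hF : ∀ z, free F0 z → z = x) :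
    Closed (APP x E0 F0) := by
  intro w hw
  rcases hw with hw | hw
  · exact closed_PP hE hF w hw
  · exact closed_substC hE (closed_PP hE hF) w hw

/-- the unfolding of `PP` -/
theorem unfold_PP {x : ℕ} {E0 F0 : Expr} :
    subst (.sum (.pre Act.tau (.sum (.pri (.var x)) E0)) F0) x
        (.recur x (.sum (.pre Act.tau (.sum (.pri (.var x)) E0)) F0))
      = .sum (.pre Act.tau (APP x E0 F0)) (subst F0 x (PP x E0 F0)) := by
  simp [subst, APP, PP]

theorem unfold_QQ {x : ℕ} {E0 F0 : Expr} :
    subst (.sum (.sum (.pre Act.tau (.var x)) E0) F0) x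
        (.recur x (.sum (.sum (.pre Act.tau (.var x)) E0) F0))
      = .sum (.sum (.pre Act.tau (QQ x E0 F0)) (subst E0 x (QQ x E0 F0)))
          (subst F0 x (QQ x E0 F0)) := by
  simp [subst, QQ]

theorem stepP_tau {x : ℕ} {E0 F0 : Expr} :
    StepStd (PP x E0 F0) Act.tau (APP x E0 F0) := by
  apply StepStd.unf
  rw [unfold_PP]
  exact .sumL _ (.pre (by simp) _)

theorem stepQ_tau {x : ℕ} {E0 F0 : Expr} :
    StepStd (QQ x E0 F0) Act.tau (QQ x E0 F0) := by
  apply StepStd.unf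
  rw [unfold_QQ]
  exact .sumL _ (.sumL _ (.pre (by simp) _))

theorem stepP_f {x : ℕ} {E0 F0 : Expr} {γ V}
    (h : StepStd (subst F0 x (PP x E0 F0)) γ V) : StepStd (PP x E0 F0) γ V := by
  apply StepStd.unf
  rw [unfold_PP]
  exact .sumR _ h

theorem stepQ_e {x : ℕ} {E0 F0 : Expr} {γ V}
    (h : StepStd (subst E0 x (QQ x E0 F0)) γ V) : StepStd (QQ x E0 F0) γ V := by
  apply StepStd.unf
  rw [unfold_QQ]
  exact .sumL _ (.sumR _ h)

theorem stepQ_f {x : ℕ} {E0 F0 : Expr} {γ V}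
    (h : StepStd (subst F0 x (QQ x E0 F0)) γ V) : StepStd (QQ x E0 F0) γ V := by
  apply StepStd.unf
  rw [unfold_QQ]
  exact .sumR _ h

theorem stepAPP_e {x : ℕ} {E0 F0 : Expr} {γ V}
    (h : StepStd (subst E0 x (PP x E0 F0)) γ V) : StepStd (APP x E0 F0) γ V := .sumR _ h

theorem stepAPP_P {x : ℕ} {E0 F0 : Expr} {γ V}
    (h : StepStd (PP x E0 F0) γ V) : StepStd (APP x E0 F0) γ V := .sumL _ (.pri h)

theorem noDel_PP {x : ℕ} {E0 F0 : Expr} {R'} (h : StepDel (PP x E0 F0) R') : False := by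
  cases h with
  | unf h1 =>
    rw [unfold_PP] at h1
    cases h1 with
    | sumL _ h2 _ => cases h2
    | sumR _ _ hnc => exact hnc ⟨_, .pre (by simp) _⟩

theorem noDel_QQ {x : ℕ} {E0 F0 : Expr} {R'} (h : StepDel (QQ x E0 F0) R') : False := by
  cases h with
  | unf h1 =>
    rw [unfold_QQ] at h1
    cases h1 with
    | sumL _ h2 hnc =>
      cases h2 with
      | sumL _ h3 _ => cases h3
      | sumR _ _ hnc2 => exact hnc2 ⟨_, .pre (by simp) _⟩
    | sumR _ _ hnc => exact hnc ⟨_, .sumL _ (.pre (by simp) _)⟩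

theorem noDel_APP {x : ℕ} {E0 F0 : Expr} {R'} (h : StepDel (APP x E0 F0) R') : False := by
  cases h with
  | sumL _ h2 _ => cases h2
  | sumR _ _ hnc => exact hnc ⟨_, .pri stepP_tau⟩

/-! ### Weak transition helpers -/

theorem mkStep_std {T γ V} (h : StepStd T γ V) : Step T γ V := by
  rw [Step, if_neg (stepStd_ne_delta h)]
  exact h

theorem mkStep_del {T V} (h : StepDel T V) : Step T Act.delta V := by
  rw [Step, if_pos rfl]
  exact h

theorem step_tau_std {T V} (h : Step T Act.tau V) : StepStd T Act.tau V := by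
  rwa [Step, if_neg (by simp)] at h

theorem weak_single {T γ V} (h : Step T γ V) : Weak T γ V :=
  ⟨T, V, Relation.ReflTransGen.refl, h, Relation.ReflTransGen.refl⟩

theorem weak_tau_cons {T W γ V} (h : Step T Act.tau W) (hw : Weak W γ V) : Weak T γ V := by
  obtain ⟨P1, P2, h1, h2, h3⟩ := hw
  exact ⟨P1, P2, Relation.ReflTransGen.head h h1, h2, h3⟩

theorem weak_to_star {T V} (h : Weak T Act.tau V) : TauStar T V := by
  obtain ⟨P1, P2, h1, h2, h3⟩ := h
  exact Relation.ReflTransGen.trans h1 (Relation.ReflTransGen.head h2 h3)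

theorem weak_canTau {T V} (h : Weak T Act.tau V) : CanTau T := by
  obtain ⟨P1, P2, h1, h2, h3⟩ := h
  rcases Relation.ReflTransGen.cases_head h1 with rfl | ⟨W, hW, _⟩
  · exact ⟨P2, step_tau_std h2⟩
  · exact ⟨W, step_tau_std hW⟩

theorem weak_hat {T γ V} (h : Weak T γ V) : WeakHat T γ V := by
  by_cases hγ : γ = Act.tau
  · subst hγ; rw [WeakHat, if_pos rfl]; exact weak_to_star h
  · rwa [WeakHat, if_neg hγ]

/-- inject a weak non-δ transition of an actively-placed closed subterm -/
theorem weak_inj_std {G : Expr} {z : ℕ} {ρ : ℕ → Expr} {γ V}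
    (hA : Atop G z) (hcl : ∀ w, free G w → Closed (ρ w)) (hγ : γ ≠ Act.delta)
    (h : Weak (ρ z) γ V) : Weak (msubst G ρ) γ V := by
  obtain ⟨P1, P2, h1, h2, h3⟩ := h
  rcases Relation.ReflTransGen.cases_head h1 with rfl | ⟨W, hW, hrest⟩
  · rw [Step, if_neg hγ] at h2
    exact ⟨msubst G ρ, P2, Relation.ReflTransGen.refl,
      mkStep_std (atop_inj hA ρ hcl h2), h3⟩
  · exact ⟨P1, P2, Relation.ReflTransGen.head
      (mkStep_std (atop_inj hA ρ hcl (step_tau_std hW))) hrest, h2, h3⟩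

/-- inject a weak δ-transition, given a δ-transfer function -/
theorem weak_inj_del {G : Expr} {z : ℕ} {ρ : ℕ → Expr} {V}
    (hA : Atop G z) (hcl : ∀ w, free G w → Closed (ρ w))
    (tf : ∀ V', StepDel (ρ z) V' → StepDel (msubst G ρ) V')
    (h : Weak (ρ z) Act.delta V) : Weak (msubst G ρ) Act.delta V := by
  obtain ⟨P1, P2, h1, h2, h3⟩ := h
  rcases Relation.ReflTransGen.cases_head h1 with rfl | ⟨W, hW, hrest⟩
  · rw [Step, if_pos rfl] at h2
    exact ⟨msubst G ρ, P2, Relation.ReflTransGen.refl, mkStep_del (tf _ h2), h3⟩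
  · exact ⟨P1, P2, Relation.ReflTransGen.head
      (mkStep_std (atop_inj hA ρ hcl (step_tau_std hW))) hrest, h2, h3⟩

theorem weak_P_to_APP {x : ℕ} {E0 F0 : Expr} {γ V}
    (h : Weak (PP x E0 F0) γ V) : Weak (APP x E0 F0) γ V := by
  obtain ⟨P1, P2, h1, h2, h3⟩ := h
  rcases Relation.ReflTransGen.cases_head h1 with rfl | ⟨W, hW, hrest⟩
  · by_cases hγ : γ = Act.delta
    · subst hγ; rw [Step, if_pos rfl] at h2; exact absurd h2 noDel_PP
    · rw [Step, if_neg hγ] at h2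
      exact ⟨APP x E0 F0, P2, Relation.ReflTransGen.refl, mkStep_std (stepAPP_P h2), h3⟩
  · exact ⟨P1, P2, Relation.ReflTransGen.head
      (mkStep_std (stepAPP_P (step_tau_std hW))) hrest, h2, h3⟩


/-! ### hole conditions -/

theorem hole_same {x : ℕ} {T : Expr} : hole x T x = T := if_pos rfl

theorem hole_cond (W : Expr → Expr → Prop) {x : ℕ} {G T U : Expr}
    (hG : ∀ z, free G z → z = x) (hT : Closed T) (hU : Closed U) (hr : W T U) :
    ∀ z, free G z → Closed (hole x T z) ∧ Closed (hole x U z) ∧ W (hole x T z) (hole x U z) := by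
  intro z hz
  have hzx := hG z hz
  subst hzx
  rw [hole_same, hole_same]
  exact ⟨hT, hU, hr⟩

theorem hW_Rel {x : ℕ} {E0 F0 : Expr} :
    ∀ G σ ρ, (∀ z, free G z → Closed (σ z) ∧ Closed (ρ z) ∧ Rel x E0 F0 (σ z) (ρ z)) →
      Rel x E0 F0 (msubst G σ) (msubst G ρ) :=
  fun G σ ρ h => rel_ctx' G σ ρ h

/-- the flipped relation -/
def RelB (x : ℕ) (E0 F0 : Expr) : Expr → Expr → Prop := fun T U => Rel x E0 F0 U T

theorem hW_RelB {x : ℕ} {E0 F0 : Expr} :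
    ∀ G σ ρ, (∀ z, free G z → Closed (σ z) ∧ Closed (ρ z) ∧ RelB x E0 F0 (σ z) (ρ z)) →
      RelB x E0 F0 (msubst G σ) (msubst G ρ) :=
  fun G σ ρ h => rel_ctx' G ρ σ (fun z hz => ⟨(h z hz).2.1, (h z hz).1, (h z hz).2.2⟩)

/-! ### The main simulation lemmas (standard actions) -/

theorem Lfwd_std {x : ℕ} {E0 F0 : Expr}
    (hE : ∀ z, free E0 z → z = x) (hF : ∀ z, free F0 z → z = x) :
    ∀ (n : ℕ) (T U : Expr), Rel x E0 F0 T U → ∀ m, m ≤ n → ∀ (γ : Act) (R' : Expr),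
    StepStdN m T γ R' → ∃ U', Weak U γ U' ∧ Rel x E0 F0 R' U' := by
  intro n
  induction n using Nat.strong_induction_on with
  | _ n IH =>
  intro T U hrel
  induction hrel with
  | base =>
    intro m hm γ R' h
    have h' : StepStdN m (Expr.recur x (.sum (.pre Act.tau (.sum (.pri (.var x)) E0)) F0))
        γ R' := h
    clear h
    cases h' with
    | @unf m1 _ _ _ _ h1 =>
      rw [unfold_PP] at h1
      cases h1 with
      | @sumL m2 _ _ _ _ h2 =>
        cases h2 with
        | pre =>
          exact ⟨QQ x E0 F0, weak_single (mkStep_std stepQ_tau), .baseA⟩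
      | @sumR m2 _ _ _ _ h2 =>
        rw [subst_eq_msubst] at h2
        rcases decompStd (Rel x E0 F0) hW_Rel m2 F0 _ _ γ R' h2
            (hole_cond _ hF (closed_PP hE hF) (closed_QQ hE hF) Rel.base) with
          ⟨G', σ', ρ', rfl, st, h'⟩ | ⟨z, m', hA, hs, hle, hor⟩
        · refine ⟨msubst G' ρ', weak_single (mkStep_std (stepQ_f ?_)), rel_ctx' G' σ' ρ' h'⟩
          rwa [subst_eq_msubst]
        · have hzx := hF z (atop_free hA)
          subst hzx
          rw [hole_same] at hs
          exact IH m' (by omega) _ _ Rel.base m' (le_refl m') γ R' hs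
  | baseA =>
    intro m hm γ R' h
    have h' : StepStdN m (.sum (.pri (PP x E0 F0)) (subst E0 x (PP x E0 F0))) γ R' := h
    clear h
    cases h' with
    | @sumL m1 _ _ _ _ h1 =>
      cases h1 with
      | @pri m2 _ _ _ h2 =>
        exact IH m2 (by omega) _ _ Rel.base m2 (le_refl m2) γ R' h2
    | @sumR m1 _ _ _ _ h1 =>
      rw [subst_eq_msubst] at h1
      rcases decompStd (Rel x E0 F0) hW_Rel m1 E0 _ _ γ R' h1
          (hole_cond _ hE (closed_PP hE hF) (closed_QQ hE hF) Rel.base) with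
        ⟨G', σ', ρ', rfl, st, h'⟩ | ⟨z, m', hA, hs, hle, hor⟩
      · refine ⟨msubst G' ρ', weak_single (mkStep_std (stepQ_e ?_)), rel_ctx' G' σ' ρ' h'⟩
        rwa [subst_eq_msubst]
      · have hzx := hE z (atop_free hA)
        subst hzx
        rw [hole_same] at hs
        exact IH m' (by omega) _ _ Rel.base m' (le_refl m') γ R' hs
  | ctx G σ ρ hclσ hclρ hrel ihz =>
    intro m hm γ R' h
    rcases decompStd (Rel x E0 F0) hW_Rel m G σ ρ γ R' h
        (fun z hz => ⟨hclσ z hz, hclρ z hz, hrel z hz⟩) with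
      ⟨G', σ', ρ', rfl, st, h'⟩ | ⟨z, m', hA, hs, hle, hor⟩
    · exact ⟨msubst G' ρ', weak_single (mkStep_std st), rel_ctx' G' σ' ρ' h'⟩
    · have hfz := atop_free hA
      have hγδ : γ ≠ Act.delta := stepStd_ne_delta (stepStdN_sound hs)
      rcases hor with hlt | hvar
      · rcases IH m' (by omega) _ _ (hrel z hfz) m' (le_refl m') γ R' hs with ⟨U', hw, hr'⟩
        exact ⟨U', weak_inj_std hA (fun w hw => hclρ w hw) hγδ hw, hr'⟩
      · rcases ihz z hfz m' (by omega) γ R' hs with ⟨U', hw, hr'⟩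
        exact ⟨U', weak_inj_std hA (fun w hw => hclρ w hw) hγδ hw, hr'⟩

theorem Lbwd_std {x : ℕ} {E0 F0 : Expr}
    (hE : ∀ z, free E0 z → z = x) (hF : ∀ z, free F0 z → z = x) :
    ∀ (n : ℕ) (T U : Expr), Rel x E0 F0 T U → ∀ m, m ≤ n → ∀ (γ : Act) (S' : Expr),
    StepStdN m U γ S' → ∃ T', Weak T γ T' ∧ Rel x E0 F0 T' S' := by
  intro n
  induction n using Nat.strong_induction_on with
  | _ n IH =>
  intro T U hrel
  induction hrel with
  | base =>
    intro m hm γ S' h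
    have h' : StepStdN m (Expr.recur x (.sum (.sum (.pre Act.tau (.var x)) E0) F0)) γ S' := h
    clear h
    cases h' with
    | @unf m1 _ _ _ _ h1 =>
      rw [unfold_QQ] at h1
      cases h1 with
      | @sumL m2 _ _ _ _ h2 =>
        cases h2 with
        | @sumL m3 _ _ _ _ h3 =>
          cases h3 with
          | pre => exact ⟨APP x E0 F0, weak_single (mkStep_std stepP_tau), .baseA⟩
        | @sumR m3 _ _ _ _ h3 =>
          rw [subst_eq_msubst] at h3
          rcases decompStd (RelB x E0 F0) hW_RelB m3 E0 _ _ γ S' h3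
              (hole_cond _ hE (closed_QQ hE hF) (closed_PP hE hF) Rel.base) with
            ⟨G', σ', ρ', rfl, st, h'⟩ | ⟨z, m', hA, hs, hle, hor⟩
          · refine ⟨msubst G' ρ',
              weak_tau_cons (mkStep_std stepP_tau)
                (weak_single (mkStep_std (stepAPP_e ?_))),
              rel_ctx' G' ρ' σ' (fun z hz => ⟨(h' z hz).2.1, (h' z hz).1, (h' z hz).2.2⟩)⟩
            rwa [subst_eq_msubst]
          · have hzx := hE z (atop_free hA)
            subst hzx
            rw [hole_same] at hs
            exact IH m' (by omega) _ _ Rel.base m' (le_refl m') γ S' hs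
      | @sumR m2 _ _ _ _ h2 =>
        rw [subst_eq_msubst] at h2
        rcases decompStd (RelB x E0 F0) hW_RelB m2 F0 _ _ γ S' h2
            (hole_cond _ hF (closed_QQ hE hF) (closed_PP hE hF) Rel.base) with
          ⟨G', σ', ρ', rfl, st, h'⟩ | ⟨z, m', hA, hs, hle, hor⟩
        · refine ⟨msubst G' ρ', weak_single (mkStep_std (stepP_f ?_)),
            rel_ctx' G' ρ' σ' (fun z hz => ⟨(h' z hz).2.1, (h' z hz).1, (h' z hz).2.2⟩)⟩
          rwa [subst_eq_msubst]
        · have hzx := hF z (atop_free hA)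
          subst hzx
          rw [hole_same] at hs
          exact IH m' (by omega) _ _ Rel.base m' (le_refl m') γ S' hs
  | baseA =>
    intro m hm γ S' h
    have h' : StepStdN m (Expr.recur x (.sum (.sum (.pre Act.tau (.var x)) E0) F0)) γ S' := h
    clear h
    cases h' with
    | @unf m1 _ _ _ _ h1 =>
      rw [unfold_QQ] at h1
      cases h1 with
      | @sumL m2 _ _ _ _ h2 =>
        cases h2 with
        | @sumL m3 _ _ _ _ h3 =>
          cases h3 with
          | pre =>
            exact ⟨APP x E0 F0, weak_single (mkStep_std (stepAPP_P stepP_tau)), .baseA⟩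
        | @sumR m3 _ _ _ _ h3 =>
          rw [subst_eq_msubst] at h3
          rcases decompStd (RelB x E0 F0) hW_RelB m3 E0 _ _ γ S' h3
              (hole_cond _ hE (closed_QQ hE hF) (closed_PP hE hF) Rel.base) with
            ⟨G', σ', ρ', rfl, st, h'⟩ | ⟨z, m', hA, hs, hle, hor⟩
          · refine ⟨msubst G' ρ', weak_single (mkStep_std (stepAPP_e ?_)),
              rel_ctx' G' ρ' σ' (fun z hz => ⟨(h' z hz).2.1, (h' z hz).1, (h' z hz).2.2⟩)⟩
            rwa [subst_eq_msubst]
          · have hzx := hE z (atop_free hA)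
            subst hzx
            rw [hole_same] at hs
            rcases IH m' (by omega) _ _ Rel.base m' (le_refl m') γ S' hs with ⟨T', hw, hr⟩
            exact ⟨T', weak_P_to_APP hw, hr⟩
      | @sumR m2 _ _ _ _ h2 =>
        rw [subst_eq_msubst] at h2
        rcases decompStd (RelB x E0 F0) hW_RelB m2 F0 _ _ γ S' h2
            (hole_cond _ hF (closed_QQ hE hF) (closed_PP hE hF) Rel.base) with
          ⟨G', σ', ρ', rfl, st, h'⟩ | ⟨z, m', hA, hs, hle, hor⟩
        · refine ⟨msubst G' ρ', weak_single (mkStep_std (stepAPP_P (stepP_f ?_))),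
            rel_ctx' G' ρ' σ' (fun z hz => ⟨(h' z hz).2.1, (h' z hz).1, (h' z hz).2.2⟩)⟩
          rwa [subst_eq_msubst]
        · have hzx := hF z (atop_free hA)
          subst hzx
          rw [hole_same] at hs
          rcases IH m' (by omega) _ _ Rel.base m' (le_refl m') γ S' hs with ⟨T', hw, hr⟩
          exact ⟨T', weak_P_to_APP hw, hr⟩
  | ctx G σ ρ hclσ hclρ hrel ihz =>
    intro m hm γ S' h
    rcases decompStd (RelB x E0 F0) hW_RelB m G ρ σ γ S' h
        (fun z hz => ⟨hclρ z hz, hclσ z hz, hrel z hz⟩) with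
      ⟨G', σ', ρ', rfl, st, h'⟩ | ⟨z, m', hA, hs, hle, hor⟩
    · exact ⟨msubst G' ρ', weak_single (mkStep_std st),
        rel_ctx' G' ρ' σ' (fun z hz => ⟨(h' z hz).2.1, (h' z hz).1, (h' z hz).2.2⟩)⟩
    · have hfz := atop_free hA
      have hγδ : γ ≠ Act.delta := stepStd_ne_delta (stepStdN_sound hs)
      rcases hor with hlt | hvar
      · rcases IH m' (by omega) _ _ (hrel z hfz) m' (le_refl m') γ S' hs with ⟨T', hw, hr'⟩
        exact ⟨T', weak_inj_std hA (fun w hw => hclσ w hw) hγδ hw, hr'⟩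
      · rcases ihz z hfz m' (by omega) γ S' hs with ⟨T', hw, hr'⟩
        exact ⟨T', weak_inj_std hA (fun w hw => hclσ w hw) hγδ hw, hr'⟩

/-! ### CanTau transfer and δ-simulation -/

theorem rel_canTau {x : ℕ} {E0 F0 : Expr}
    (hE : ∀ z, free E0 z → z = x) (hF : ∀ z, free F0 z → z = x)
    {T U : Expr} (hrel : Rel x E0 F0 T U) : CanTau T ↔ CanTau U := by
  constructor
  · rintro ⟨T', h⟩
    rcases stepStd_toN h with ⟨n, hn⟩
    rcases Lfwd_std hE hF n T U hrel n (le_refl n) Act.tau T' hn with ⟨U', hw, _⟩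
    exact weak_canTau hw
  · rintro ⟨U', h⟩
    rcases stepStd_toN h with ⟨n, hn⟩
    rcases Lbwd_std hE hF n T U hrel n (le_refl n) Act.tau U' hn with ⟨T', hw, _⟩
    exact weak_canTau hw

theorem Lfwd_del {x : ℕ} {E0 F0 : Expr}
    (hE : ∀ z, free E0 z → z = x) (hF : ∀ z, free F0 z → z = x) :
    ∀ (n : ℕ) (T U : Expr), Rel x E0 F0 T U → ∀ m, m ≤ n → ∀ (R' : Expr),
    StepDelN m T R' → ∃ U', Weak U Act.delta U' ∧ Rel x E0 F0 R' U' := by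
  intro n
  induction n using Nat.strong_induction_on with
  | _ n IH =>
  intro T U hrel
  induction hrel with
  | base => intro m hm R' h; exact absurd (stepDelN_sound h) noDel_PP
  | baseA => intro m hm R' h; exact absurd (stepDelN_sound h) noDel_APP
  | ctx G σ ρ hclσ hclρ hrel ihz =>
    intro m hm R' h
    rcases decompDel (Rel x E0 F0) hW_Rel (fun T U hr => rel_canTau hE hF hr)
        m G σ ρ R' h (fun z hz => ⟨hclσ z hz, hclρ z hz, hrel z hz⟩) with
      ⟨G', σ', ρ', rfl, st, h'⟩ | ⟨z, m', hA, hs, hle, hor, tf⟩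
    · exact ⟨msubst G' ρ', weak_single (mkStep_del st), rel_ctx' G' σ' ρ' h'⟩
    · have hfz := atop_free hA
      rcases hor with hlt | hvar
      · rcases IH m' (by omega) _ _ (hrel z hfz) m' (le_refl m') R' hs with ⟨U', hw, hr'⟩
        exact ⟨U', weak_inj_del hA (fun w hw => hclρ w hw) tf hw, hr'⟩
      · rcases ihz z hfz m' (by omega) R' hs with ⟨U', hw, hr'⟩
        exact ⟨U', weak_inj_del hA (fun w hw => hclρ w hw) tf hw, hr'⟩

theorem Lbwd_del {x : ℕ} {E0 F0 : Expr}
    (hE : ∀ z, free E0 z → z = x) (hF : ∀ z, free F0 z → z = x) :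
    ∀ (n : ℕ) (T U : Expr), Rel x E0 F0 T U → ∀ m, m ≤ n → ∀ (S' : Expr),
    StepDelN m U S' → ∃ T', Weak T Act.delta T' ∧ Rel x E0 F0 T' S' := by
  intro n
  induction n using Nat.strong_induction_on with
  | _ n IH =>
  intro T U hrel
  induction hrel with
  | base => intro m hm S' h; exact absurd (stepDelN_sound h) noDel_QQ
  | baseA => intro m hm S' h; exact absurd (stepDelN_sound h) noDel_QQ
  | ctx G σ ρ hclσ hclρ hrel ihz =>
    intro m hm S' h
    rcases decompDel (RelB x E0 F0) hW_RelB
        (fun T U hr => (rel_canTau hE hF hr).symm)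
        m G ρ σ S' h (fun z hz => ⟨hclρ z hz, hclσ z hz, hrel z hz⟩) with
      ⟨G', σ', ρ', rfl, st, h'⟩ | ⟨z, m', hA, hs, hle, hor, tf⟩
    · exact ⟨msubst G' ρ', weak_single (mkStep_del st),
        rel_ctx' G' ρ' σ' (fun z hz => ⟨(h' z hz).2.1, (h' z hz).1, (h' z hz).2.2⟩)⟩
    · have hfz := atop_free hA
      rcases hor with hlt | hvar
      · rcases IH m' (by omega) _ _ (hrel z hfz) m' (le_refl m') S' hs with ⟨T', hw, hr'⟩
        exact ⟨T', weak_inj_del hA (fun w hw => hclσ w hw) tf hw, hr'⟩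
      · rcases ihz z hfz m' (by omega) S' hs with ⟨T', hw, hr'⟩
        exact ⟨T', weak_inj_del hA (fun w hw => hclσ w hw) tf hw, hr'⟩

/-! ### `Rel` is a weak bisimulation -/

theorem isWeakBisim_Rel {x : ℕ} {E0 F0 : Expr}
    (hE : ∀ z, free E0 z → z = x) (hF : ∀ z, free F0 z → z = x) :
    IsWeakBisim (Rel x E0 F0) := by
  intro T U hrel
  constructor
  · intro γ T' h
    by_cases hγ : γ = Act.delta
    · subst hγ
      rw [Step, if_pos rfl] at h
      rcases stepDel_toN h with ⟨n, hn⟩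
      rcases Lfwd_del hE hF n T U hrel n (le_refl n) T' hn with ⟨U', hw, hr⟩
      exact ⟨U', weak_hat hw, hr⟩
    · rw [Step, if_neg hγ] at h
      rcases stepStd_toN h with ⟨n, hn⟩
      rcases Lfwd_std hE hF n T U hrel n (le_refl n) γ T' hn with ⟨U', hw, hr⟩
      exact ⟨U', weak_hat hw, hr⟩
  · intro γ U' h
    by_cases hγ : γ = Act.delta
    · subst hγ
      rw [Step, if_pos rfl] at h
      rcases stepDel_toN h with ⟨n, hn⟩
      rcases Lbwd_del hE hF n T U hrel n (le_refl n) U' hn with ⟨T', hw, hr⟩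
      exact ⟨T', weak_hat hw, hr⟩
    · rw [Step, if_neg hγ] at h
      rcases stepStd_toN h with ⟨n, hn⟩
      rcases Lbwd_std hE hF n T U hrel n (le_refl n) γ U' hn with ⟨T', hw, hr⟩
      exact ⟨T', weak_hat hw, hr⟩

theorem obsCong_PP_QQ {x : ℕ} {E0 F0 : Expr}
    (hE : ∀ z, free E0 z → z = x) (hF : ∀ z, free F0 z → z = x) :
    ObsCong (PP x E0 F0) (QQ x E0 F0) := by
  constructor
  · intro γ P' h
    by_cases hγ : γ = Act.delta
    · subst hγ
      rw [Step, if_pos rfl] at h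
      exact absurd h noDel_PP
    · rw [Step, if_neg hγ] at h
      rcases stepStd_toN h with ⟨n, hn⟩
      rcases Lfwd_std hE hF n _ _ Rel.base n (le_refl n) γ P' hn with ⟨U', hw, hr⟩
      exact ⟨U', hw, Rel x E0 F0, isWeakBisim_Rel hE hF, hr⟩
  · intro γ Q' h
    by_cases hγ : γ = Act.delta
    · subst hγ
      rw [Step, if_pos rfl] at h
      exact absurd h noDel_QQ
    · rw [Step, if_neg hγ] at h
      rcases stepStd_toN h with ⟨n, hn⟩
      rcases Lbwd_std hE hF n _ _ Rel.base n (le_refl n) γ Q' hn with ⟨T', hw, hr⟩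
      exact ⟨T', hw, Rel x E0 F0, isWeakBisim_Rel hE hF, hr⟩

/-- soundness of (Ung4):
rec X.(τ.(pri(X) + E) + F) ≃ rec X.(τ.X + E + F). -/
theorem ung4_sound (x : ℕ) (E F : Expr) :
    ObsCongO (.recur x (.sum (.pre Act.tau (.sum (.pri (.var x)) E)) F))
             (.recur x (.sum (.sum (.pre Act.tau (.var x)) E) F)) := by
  intro σ hσ
  have hL : msubst (.recur x (.sum (.pre Act.tau (.sum (.pri (.var x)) E)) F)) σ
      = PP x (msubst E (Function.update σ x (.var x))) (msubst F (Function.update σ x (.var x))) := by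
    simp [msubst, PP]
  have hR : msubst (.recur x (.sum (.sum (.pre Act.tau (.var x)) E) F)) σ
      = QQ x (msubst E (Function.update σ x (.var x))) (msubst F (Function.update σ x (.var x))) := by
    simp [msubst, QQ]
  rw [hL, hR]
  have hcl : ∀ (G : Expr) (z : ℕ), free (msubst G (Function.update σ x (.var x))) z → z = x := by
    intro G z hz
    rcases free_msubst hz with ⟨w, h1, h2⟩
    by_cases hwx : w = x
    · subst hwx
      rw [Function.update_self] at h2
      exact h2.symm
    · rw [Function.update_of_ne hwx] at h2
      exact absurd h2 (hσ w z)
  exact obsCong_PP_QQ (hcl E) (hcl F)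

end PrioCalc
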